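/- For every irrational real number α with 0 < α < 1, there exists a Sturmian word w over {0,1} (i.e., with complexity Comp_w(n) = n+1 for all n ≥ 1) whose slope is α, namely the word w(n) = ⌊(n+1)α⌋ − ⌊nα⌋. -/

import Mathlib

open Filter Topology

/-- The set of factors (contiguous subwords) of length `n` of the infinite word `w`. -/
def Factors (w : ℕ → Fin 2) (n : ℕ) : Set (Fin n → Fin 2) :=
  {v | ∃ i : ℕ, ∀ j : Fin n, v j = w (i + j)}

/-- The complexity function: number of distinct factors of length `n`. -/
noncomputable def Comp (w : ℕ → Fin 2) (n : ℕ) : ℕ := (Factors w n).ncard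

/-- The height of a finite word: the number of letters equal to `1`. -/
def hcount {n : ℕ} (v : Fin n → Fin 2) : ℕ := (Finset.univ.filter fun j => v j = 1).card

/-- Number of `1`'s among `w 0, …, w (n-1)` (height of the prefix of length `n`). -/
def pcount (w : ℕ → Fin 2) (n : ℕ) : ℕ := ((Finset.range n).filter fun i => w i = 1).card


namespace Sturmian

variable {α : ℝ}

lemma intmul_ne_intCast (hirr : Irrational α) {m : ℤ} (hm : m ≠ 0) (z : ℤ) :
    (m : ℝ) * α ≠ (z : ℝ) := (hirr.intCast_mul hm).ne_int z

lemma fract_pos (hirr : Irrational α) {p : ℕ} (hp : p ≠ 0) :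
    0 < Int.fract ((p : ℝ) * α) := by
  rcases (Int.fract_nonneg ((p:ℝ)*α)).lt_or_eq with h | h
  · exact h
  · exfalso
    have h2 := Int.self_sub_floor ((p:ℝ)*α)
    exact intmul_ne_intCast hirr (m := (p:ℤ)) (by exact_mod_cast hp) ⌊(p:ℝ)*α⌋
      (by push_cast; linarith [h2, h.symm])

lemma fract_add_fract_ne_one (hirr : Irrational α) (a b : ℕ) :
    Int.fract ((a:ℝ)*α) + Int.fract ((b:ℝ)*α) ≠ 1 := by
  intro h
  rcases Nat.eq_zero_or_pos (a + b) with hab | hab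
  · obtain ⟨ha, hb⟩ := Nat.add_eq_zero.mp hab
    simp [ha, hb, Int.fract] at h
  · have ha := Int.self_sub_floor ((a:ℝ)*α)
    have hb := Int.self_sub_floor ((b:ℝ)*α)
    exact intmul_ne_intCast hirr (m := ((a+b:ℕ):ℤ)) (by exact_mod_cast hab.ne')
      (⌊(a:ℝ)*α⌋ + ⌊(b:ℝ)*α⌋ + 1) (by push_cast; nlinarith [ha, hb, h])

lemma fract_injective (hirr : Irrational α) {a b : ℕ}
    (h : Int.fract ((a:ℝ)*α) = Int.fract ((b:ℝ)*α)) : a = b := by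
  by_contra hne
  have ha := Int.self_sub_floor ((a:ℝ)*α)
  have hb := Int.self_sub_floor ((b:ℝ)*α)
  exact intmul_ne_intCast hirr (m := (a:ℤ) - b)
    (by simp only [ne_eq, sub_eq_zero]; exact_mod_cast hne)
    (⌊(a:ℝ)*α⌋ - ⌊(b:ℝ)*α⌋) (by push_cast; nlinarith [ha, hb, h])


lemma floor_split {x y : ℝ} (hx : 0 ≤ x) (hx1 : x < 1) (hy : 0 ≤ y) (hy1 : y < 1) :
    ⌊x + y⌋ = if 1 ≤ x + y then 1 else 0 := by
  split_ifs with h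
  · exact Int.floor_eq_iff.mpr (by constructor <;> [skip; push_cast] <;> push_cast <;> linarith)
  · exact Int.floor_eq_iff.mpr (by constructor <;> push_cast <;> [linarith; linarith [not_le.mp h]])

lemma floor_fract_add (i k : ℕ) :
    ⌊Int.fract ((i:ℝ)*α) + (k:ℝ)*α⌋
      = ⌊(k:ℝ)*α⌋ + if 1 ≤ Int.fract ((i:ℝ)*α) + Int.fract ((k:ℝ)*α) then 1 else 0 := by
  have h : Int.fract ((i:ℝ)*α) + (k:ℝ)*α
      = Int.fract ((i:ℝ)*α) + Int.fract ((k:ℝ)*α) + (⌊(k:ℝ)*α⌋ : ℝ) := by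
    have := Int.self_sub_floor ((k:ℝ)*α); linarith
  rw [h, Int.floor_add_intCast,
    floor_split (Int.fract_nonneg _) (Int.fract_lt_one _) (Int.fract_nonneg _) (Int.fract_lt_one _)]
  ring

lemma floor_add_nat (i k : ℕ) :
    ⌊((i+k:ℕ):ℝ)*α⌋ = ⌊(i:ℝ)*α⌋ + ⌊Int.fract ((i:ℝ)*α) + (k:ℝ)*α⌋ := by
  have h : ((i+k:ℕ):ℝ)*α = (⌊(i:ℝ)*α⌋ : ℝ) + (Int.fract ((i:ℝ)*α) + (k:ℝ)*α) := by
    have := Int.self_sub_floor ((i:ℝ)*α); push_cast; linarith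
  rw [h, Int.floor_intCast_add]


lemma exists_small_fract (hirr : Irrational α) {ε : ℝ} (hε : 0 < ε) (hε1 : ε ≤ 1) :
    ∃ p : ℕ, p ≠ 0 ∧ (Int.fract ((p:ℝ)*α) < ε ∨ 1 - ε < Int.fract ((p:ℝ)*α)) := by
  set S : AddSubgroup ℝ := AddSubgroup.closure {α, 1} with hS
  have hdense : Dense (S : Set ℝ) := by
    rcases S.dense_or_cyclic with h | ⟨a, ha⟩
    · exact h
    · exfalso
      have hα : α ∈ S := AddSubgroup.subset_closure (by simp)
      have h1 : (1:ℝ) ∈ S := AddSubgroup.subset_closure (by simp)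
      rw [ha] at hα h1
      obtain ⟨m, hm⟩ := AddSubgroup.mem_closure_singleton.mp hα
      obtain ⟨k, hk⟩ := AddSubgroup.mem_closure_singleton.mp h1
      have hk0 : k ≠ 0 := by rintro rfl; simp at hk
      have : (k:ℝ) * α = (m:ℝ) := by
        have : k • (m • a) = m • (k • a) := smul_comm k m a
        rw [hm, hk] at this
        push_cast [zsmul_eq_mul] at this ⊢
        linarith [this]
      exact intmul_ne_intCast hirr hk0 m this
  obtain ⟨g, hgS, hg⟩ := hdense.exists_between hε
  obtain ⟨m, k, hmk⟩ := AddSubgroup.mem_closure_pair.mp hgS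
  simp only [zsmul_eq_mul, mul_one] at hmk
  have hm0 : m ≠ 0 := by
    rintro rfl
    simp only [Int.cast_zero, zero_mul, zero_add] at hmk
    have : (0:ℝ) < k := hmk ▸ hg.1
    have h2 : (k:ℝ) < 1 := by linarith [hg.2]
    have : 0 < k := by exact_mod_cast this
    have h2 : k < 1 := by exact_mod_cast h2
    omega
  rcases hm0.lt_or_gt with hneg | hpos
  · refine ⟨(-m).toNat, by omega, Or.inr ?_⟩
    have hcast : (((-m).toNat : ℕ) : ℝ) = -(m:ℝ) := by
      have : ((-m).toNat : ℤ) = -m := Int.toNat_of_nonneg (by omega)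
      exact_mod_cast this
    have : (((-m).toNat : ℕ) : ℝ) * α = -g + (k:ℤ) := by rw [hcast]; push_cast; linarith [hmk]
    rw [this, Int.fract_add_intCast]
    have hfg : Int.fract (-g) = 1 - g := by
      have hfloor : ⌊-g⌋ = -1 :=
        Int.floor_eq_iff.mpr ⟨by push_cast; linarith [hg.2], by push_cast; linarith [hg.1]⟩
      rw [Int.fract, hfloor]; push_cast; ring
    rw [hfg]; linarith [hg.2]
  · refine ⟨m.toNat, by omega, Or.inl ?_⟩
    have hcast : ((m.toNat : ℕ) : ℝ) = (m:ℝ) := by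
      have : ((m.toNat : ℤ)) = m := Int.toNat_of_nonneg (by omega)
      exact_mod_cast this
    have : ((m.toNat : ℕ) : ℝ) * α = g + (-k : ℤ) := by rw [hcast]; push_cast; linarith [hmk]
    rw [this, Int.fract_add_intCast, Int.fract_eq_self.mpr ⟨le_of_lt hg.1, by linarith [hg.2]⟩]
    exact hg.2


lemma exists_nat_mul_mem {δ u' : ℝ} (hδ : 0 < δ) (hu' : 0 ≤ u') :
    ∃ K : ℕ, u' < K * δ ∧ (K:ℝ) * δ ≤ u' + δ := by
  refine ⟨(⌊u'/δ⌋).toNat + 1, ?_, ?_⟩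
  · have h1 : (⌊u'/δ⌋ : ℝ) + 1 > u'/δ := by linarith [Int.lt_floor_add_one (u'/δ)]
    have h2 : ((⌊u'/δ⌋.toNat : ℕ) : ℝ) = (⌊u'/δ⌋ : ℝ) := by
      have : ((⌊u'/δ⌋.toNat : ℤ)) = ⌊u'/δ⌋ := Int.toNat_of_nonneg (Int.floor_nonneg.mpr (by positivity))
      exact_mod_cast this
    have := (div_lt_iff₀ hδ).mp (by push_cast [h2]; linarith : u'/δ < ((⌊u'/δ⌋.toNat + 1 : ℕ):ℝ))
    linarith
  · have h1 : (⌊u'/δ⌋ : ℝ) ≤ u'/δ := Int.floor_le _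
    have h2 : ((⌊u'/δ⌋.toNat : ℕ) : ℝ) = (⌊u'/δ⌋ : ℝ) := by
      have : ((⌊u'/δ⌋.toNat : ℤ)) = ⌊u'/δ⌋ := Int.toNat_of_nonneg (Int.floor_nonneg.mpr (by positivity))
      exact_mod_cast this
    have h3 : (u'/δ) * δ = u' := div_mul_cancel₀ _ hδ.ne'
    push_cast [h2]
    nlinarith

lemma dense_fract (hirr : Irrational α) {u v : ℝ} (hu : 0 ≤ u) (hv : v ≤ 1) (huv : u < v) :
    ∃ i : ℕ, u < Int.fract ((i:ℝ)*α) ∧ Int.fract ((i:ℝ)*α) < v := by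
  obtain ⟨p, hp, hcase⟩ := exists_small_fract hirr (show (0:ℝ) < v - u by linarith)
    (by linarith)
  rcases hcase with hsmall | hbig
  · set δ := Int.fract ((p:ℝ)*α) with hδdef
    have hδ : 0 < δ := fract_pos hirr hp
    obtain ⟨K, hK1, hK2⟩ := exists_nat_mul_mem hδ hu
    refine ⟨K * p, ?_, ?_⟩ <;>
    · have hrw : (((K*p:ℕ)):ℝ) * α = (K:ℝ) * δ + ((K * ⌊(p:ℝ)*α⌋ : ℤ) : ℝ) := by
        have := Int.self_sub_floor ((p:ℝ)*α)
        push_cast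
        nlinarith [this]
      rw [hrw, Int.fract_add_intCast, Int.fract_eq_self.mpr ⟨by positivity, by linarith⟩]
      linarith
  · set δ := 1 - Int.fract ((p:ℝ)*α) with hδdef
    have hδ : 0 < δ := by have := Int.fract_lt_one ((p:ℝ)*α); simp [hδdef]; linarith
    have hδε : δ < v - u := by simp [hδdef]; linarith
    obtain ⟨K, hK1, hK2⟩ := exists_nat_mul_mem hδ (show (0:ℝ) ≤ 1 - v by linarith)
    have hKδ1 : (K:ℝ) * δ < 1 - u := by linarith
    have hKδ0 : 0 < (K:ℝ) * δ := lt_of_le_of_lt (by linarith) hK1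
    refine ⟨K * p, ?_, ?_⟩ <;>
    · have hrw : (((K*p:ℕ)):ℝ) * α = -((K:ℝ) * δ) + ((K * ⌊(p:ℝ)*α⌋ + K : ℤ) : ℝ) := by
        have := Int.self_sub_floor ((p:ℝ)*α)
        push_cast
        nlinarith [this]
      have hfr : Int.fract (-((K:ℝ)*δ)) = 1 - (K:ℝ)*δ := by
        have hfloor : ⌊-((K:ℝ)*δ)⌋ = -1 :=
          Int.floor_eq_iff.mpr ⟨by push_cast; linarith, by push_cast; linarith⟩
        rw [Int.fract, hfloor]; push_cast; ring
      rw [hrw, Int.fract_add_intCast, hfr]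
      linarith


/-- The word. -/
noncomputable def W (α : ℝ) : ℕ → Fin 2 :=
  fun n : ℕ => if ⌊((n : ℝ) + 1) * α⌋ - ⌊(n : ℝ) * α⌋ = 1 then (1 : Fin 2) else 0

/-- The indicator data determining the factor starting at `i`. -/
noncomputable def Phi (α : ℝ) (n : ℕ) (i : ℕ) : Finset ℕ :=
  (Finset.Icc 1 n).filter fun k => 1 ≤ Int.fract ((i:ℝ)*α) + Int.fract ((k:ℝ)*α)

noncomputable def ind (α : ℝ) (i k : ℕ) : ℤ :=
  if 1 ≤ Int.fract ((i:ℝ)*α) + Int.fract ((k:ℝ)*α) then 1 else 0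

lemma mem_Phi_iff {n i k : ℕ} (hk : k ∈ Finset.Icc 1 n) :
    k ∈ Phi α n i ↔ ind α i k = 1 := by
  simp only [Phi, Finset.mem_filter, hk, true_and, ind]
  split_ifs with h <;> simp [h]

lemma ind_zero (i : ℕ) : ind α i 0 = 0 := by
  have := Int.fract_lt_one ((i:ℝ)*α)
  simp only [ind, Nat.cast_zero, zero_mul, Int.fract_zero, add_zero, ite_eq_right_iff]
  intro h; linarith

lemma d01 (h0 : 0 < α) (h1 : α < 1) (m : ℕ) :
    ⌊((m : ℝ) + 1) * α⌋ - ⌊(m : ℝ) * α⌋ = 0 ∨ ⌊((m : ℝ) + 1) * α⌋ - ⌊(m : ℝ) * α⌋ = 1 := by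
  have h2 : ⌊(m : ℝ) * α⌋ ≤ ⌊((m : ℝ) + 1) * α⌋ := Int.floor_le_floor (by nlinarith)
  have h3 : ⌊((m : ℝ) + 1) * α⌋ ≤ ⌊(m : ℝ) * α + 1⌋ := Int.floor_le_floor (by nlinarith)
  rw [Int.floor_add_one] at h3
  omega

lemma W_val (h0 : 0 < α) (h1 : α < 1) (m : ℕ) :
    ((W α m : ℕ) : ℤ) = ⌊((m : ℝ) + 1) * α⌋ - ⌊(m : ℝ) * α⌋ := by
  rcases d01 h0 h1 m with h | h <;> simp [W, h]

lemma sum_W (h0 : 0 < α) (h1 : α < 1) (i k : ℕ) :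
    ∑ j ∈ Finset.range k, ((W α (i+j) : ℕ) : ℤ) = ⌊((i+k:ℕ):ℝ)*α⌋ - ⌊(i:ℝ)*α⌋ := by
  induction k with
  | zero => simp
  | succ k ih =>
    rw [Finset.sum_range_succ, ih, W_val h0 h1]
    have h2 : ((i + k : ℕ) : ℝ) + 1 = ((i + (k+1) : ℕ) : ℝ) := by push_cast; ring
    rw [h2]
    ring

lemma floor_key (i k : ℕ) :
    ⌊((i+k:ℕ):ℝ)*α⌋ - ⌊(i:ℝ)*α⌋ = ⌊(k:ℝ)*α⌋ + ind α i k := by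
  rw [floor_add_nat, floor_fract_add]; simp [ind]

lemma factor_eq_iff (h0 : 0 < α) (h1 : α < 1) (n i i' : ℕ) :
    (∀ j : Fin n, W α (i + j) = W α (i' + j)) ↔ Phi α n i = Phi α n i' := by
  constructor
  · intro h
    ext k
    by_cases hk : k ∈ Finset.Icc 1 n
    · rw [mem_Phi_iff hk, mem_Phi_iff hk]
      have hsum : ∑ j ∈ Finset.range k, ((W α (i+j) : ℕ) : ℤ)
          = ∑ j ∈ Finset.range k, ((W α (i'+j) : ℕ) : ℤ) := by
        refine Finset.sum_congr rfl fun j hj => ?_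
        have hjn : j < n := lt_of_lt_of_le (Finset.mem_range.mp hj) (Finset.mem_Icc.mp hk).2
        have hx : W α (i + j) = W α (i' + j) := h ⟨j, hjn⟩
        exact_mod_cast congrArg Fin.val hx
      rw [sum_W h0 h1, sum_W h0 h1, floor_key, floor_key] at hsum
      omega
    · simp [Phi, hk]
  · intro h j
    have hind : ∀ k, k ≤ n → ind α i k = ind α i' k := by
      intro k hkn
      rcases Nat.eq_zero_or_pos k with rfl | hk1
      · rw [ind_zero, ind_zero]
      · have hk : k ∈ Finset.Icc 1 n := Finset.mem_Icc.mpr ⟨hk1, hkn⟩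
        have h1m := mem_Phi_iff (α := α) (i := i) hk
        have h2m := mem_Phi_iff (α := α) (i := i') hk
        have hd : ind α i k = 0 ∨ ind α i k = 1 := by unfold ind; split_ifs <;> simp
        have hd' : ind α i' k = 0 ∨ ind α i' k = 1 := by unfold ind; split_ifs <;> simp
        rcases hd with hh | hh <;> rcases hd' with hh' | hh' <;> try omega
        · have hm : k ∈ Phi α n i := by rw [h]; exact h2m.mpr hh'
          have := h1m.mp hm; omega
        · have hm : k ∈ Phi α n i' := by rw [← h]; exact h1m.mpr hh
          have := h2m.mp hm; omega
    have hj1 : (j:ℕ) + 1 ≤ n := j.isLt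
    have e1 : ⌊((i + ((j:ℕ)+1) : ℕ) : ℝ) * α⌋ - ⌊(i:ℝ)*α⌋
        = ⌊(((j:ℕ)+1 : ℕ):ℝ)*α⌋ + ind α i ((j:ℕ)+1) := floor_key _ _
    have e2 : ⌊((i + (j:ℕ) : ℕ) : ℝ) * α⌋ - ⌊(i:ℝ)*α⌋
        = ⌊(((j:ℕ) : ℕ):ℝ)*α⌋ + ind α i (j:ℕ) := floor_key _ _
    have e1' : ⌊((i' + ((j:ℕ)+1) : ℕ) : ℝ) * α⌋ - ⌊(i':ℝ)*α⌋
        = ⌊(((j:ℕ)+1 : ℕ):ℝ)*α⌋ + ind α i' ((j:ℕ)+1) := floor_key _ _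
    have e2' : ⌊((i' + (j:ℕ) : ℕ) : ℝ) * α⌋ - ⌊(i':ℝ)*α⌋
        = ⌊(((j:ℕ) : ℕ):ℝ)*α⌋ + ind α i' (j:ℕ) := floor_key _ _
    have hv : ((W α (i + (j:ℕ)) : ℕ) : ℤ) = ((W α (i' + (j:ℕ)) : ℕ) : ℤ) := by
      rw [W_val h0 h1, W_val h0 h1]
      have c1 : ((i + (j:ℕ) : ℕ) : ℝ) + 1 = ((i + ((j:ℕ)+1) : ℕ) : ℝ) := by push_cast; ring
      have c1' : ((i' + (j:ℕ) : ℕ) : ℝ) + 1 = ((i' + ((j:ℕ)+1) : ℕ) : ℝ) := by push_cast; ring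
      have hja := hind (j:ℕ) (le_of_lt j.isLt)
      have hjb := hind ((j:ℕ)+1) hj1
      push_cast [c1, c1'] at e1 e2 e1' e2' ⊢
      ring_nf at e1 e2 e1' e2' hjb ⊢
      omega
    have : (W α (i + (j:ℕ)) : ℕ) = (W α (i' + (j:ℕ)) : ℕ) := by exact_mod_cast hv
    exact Fin.ext this


lemma Phi_card_le (n i : ℕ) : (Phi α n i).card ≤ n := by
  calc (Phi α n i).card ≤ (Finset.Icc 1 n).card := Finset.card_filter_le _ _
  _ = n := by rw [Nat.card_Icc]; omega

lemma Phi_eq_of_card_eq {n i i' : ℕ}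
    (h : (Phi α n i).card = (Phi α n i').card) : Phi α n i = Phi α n i' := by
  have key : ∀ a b : ℕ, Int.fract ((a:ℝ)*α) ≤ Int.fract ((b:ℝ)*α) →
      Phi α n a ⊆ Phi α n b := by
    intro a b hab
    intro k hk
    simp only [Phi, Finset.mem_filter] at hk ⊢
    exact ⟨hk.1, by linarith [hk.2]⟩
  rcases le_total (Int.fract ((i:ℝ)*α)) (Int.fract ((i':ℝ)*α)) with hle | hle
  · exact Finset.eq_of_subset_of_card_le (key _ _ hle) h.ge
  · exact (Finset.eq_of_subset_of_card_le (key _ _ hle) h.le).symm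

lemma exists_card_eq (hirr : Irrational α) (n : ℕ) {c : ℕ} (hc : c ≤ n) :
    ∃ i : ℕ, (Phi α n i).card = c := by
  classical
  set f : ℕ → ℝ := fun k => Int.fract ((k:ℝ)*α) with hf
  set A : Finset ℝ := (Finset.Icc 1 n).image f with hAdef
  have hA : A.card = n := by
    rw [hAdef, Finset.card_image_of_injOn (fun a _ b _ h => fract_injective hirr h),
      Nat.card_Icc]
    omega
  set s := A.orderEmbOfFin hA with hs
  have hsmem : ∀ j : Fin n, s j ∈ A := fun j => A.orderEmbOfFin_mem hA j
  have hssurj : ∀ a ∈ A, ∃ j : Fin n, s j = a := by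
    intro a ha
    have : a ∈ Set.range s := by rw [Finset.range_orderEmbOfFin]; exact_mod_cast ha
    exact this
  have hbound : ∀ a ∈ A, 0 < a ∧ a < 1 := by
    intro a ha
    rw [hAdef, Finset.mem_image] at ha
    obtain ⟨k, hk, rfl⟩ := ha
    exact ⟨fract_pos hirr (by have := (Finset.mem_Icc.mp hk).1; omega), Int.fract_lt_one _⟩
  set m := n - c with hm
  have hmn : m ≤ n := Nat.sub_le _ _
  have hcm : c = n - m := by omega
  set lo : ℝ := if hpos : 0 < m then s ⟨m-1, by omega⟩ else 0 with hlo
  set hi : ℝ := if hlt : m < n then s ⟨m, hlt⟩ else 1 with hhi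
  have hlo0 : 0 ≤ lo := by
    rw [hlo]; split_ifs with h
    · exact le_of_lt (hbound _ (hsmem _)).1
    · exact le_refl 0
  have hhi1 : hi ≤ 1 := by
    rw [hhi]; split_ifs with h
    · exact le_of_lt (hbound _ (hsmem _)).2
    · exact le_refl 1
  have hlohi : lo < hi := by
    rw [hlo, hhi]; split_ifs with h h2
    · exact s.strictMono (by simp [Fin.lt_def]; omega)
    · exact (hbound _ (hsmem _)).2
    · exact (hbound _ (hsmem _)).1
    · exact one_pos
  obtain ⟨i, hi1, hi2⟩ := dense_fract hirr (u := 1 - hi) (v := 1 - lo)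
    (by linarith) (by linarith) (by linarith)
  refine ⟨i, ?_⟩
  set t : ℝ := 1 - Int.fract ((i:ℝ)*α) with ht
  have htlo : lo < t := by rw [ht]; linarith
  have hthi : t < hi := by rw [ht]; linarith
  have hPhi : Phi α n i = (Finset.Icc 1 n).filter fun k => t ≤ f k := by
    unfold Phi
    refine Finset.filter_congr fun k _ => ?_
    rw [ht, hf]
    constructor <;> intro <;> simp at * <;> linarith
  have himg : (Phi α n i).image f = A.filter fun a => t ≤ a := by
    rw [hPhi, hAdef, Finset.filter_image]
  have hcard1 : (Phi α n i).card = ((Phi α n i).image f).card := by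
    rw [Finset.card_image_of_injOn]
    intro a ha b hb hab
    exact fract_injective hirr hab
  have hkey : A.filter (fun a => t ≤ a) = (Finset.univ.filter fun j : Fin n => m ≤ (j:ℕ)).image s := by
    ext a
    simp only [Finset.mem_filter, Finset.mem_image, Finset.mem_univ, true_and]
    constructor
    · rintro ⟨haA, hta⟩
      obtain ⟨j, rfl⟩ := hssurj a haA
      refine ⟨j, ?_, rfl⟩
      by_contra hjm
      push_neg at hjm
      have hm0 : 0 < m := by omega
      have : s j ≤ s ⟨m-1, by omega⟩ := s.monotone (by simp [Fin.le_def]; omega)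
      have hlos : lo = s ⟨m-1, by omega⟩ := by rw [hlo, dif_pos hm0]
      rw [← hlos] at this
      linarith
    · rintro ⟨j, hjm, rfl⟩
      refine ⟨hsmem j, ?_⟩
      have hmlt : m < n := lt_of_le_of_lt hjm j.isLt
      have : s ⟨m, hmlt⟩ ≤ s j := s.monotone (by simp [Fin.le_def]; omega)
      have hhis : hi = s ⟨m, hmlt⟩ := by rw [hhi, dif_pos hmlt]
      rw [← hhis] at this
      linarith
  have hcard2 : ((Finset.univ.filter fun j : Fin n => m ≤ (j:ℕ)).image s).card
      = (Finset.univ.filter fun j : Fin n => m ≤ (j:ℕ)).card :=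
    Finset.card_image_of_injective _ s.injective
  have hcard3 : (Finset.univ.filter fun j : Fin n => m ≤ (j:ℕ)).card = n - m := by
    have himgval : (Finset.univ.filter fun j : Fin n => m ≤ (j:ℕ)).image Fin.val
        = Finset.Ico m n := by
      ext x
      simp only [Finset.mem_image, Finset.mem_filter, Finset.mem_univ, true_and, Finset.mem_Ico]
      constructor
      · rintro ⟨j, hj, rfl⟩; exact ⟨hj, j.isLt⟩
      · rintro ⟨h1, h2⟩; exact ⟨⟨x, h2⟩, h1, rfl⟩
    have := Finset.card_image_of_injective
      (Finset.univ.filter fun j : Fin n => m ≤ (j:ℕ)) (Fin.val_injective)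
    rw [himgval] at this
    rw [← this, Nat.card_Ico]
  rw [hcard1, himg, hkey, hcard2, hcard3, ← hcm]


lemma comp_eq (hirr : Irrational α) (h0 : 0 < α) (h1 : α < 1) (n : ℕ) :
    Comp (W α) n = n + 1 := by
  classical
  set V : ℕ → (Fin n → Fin 2) := fun i => fun j : Fin n => W α (i + j) with hV
  have hVfac : Factors (W α) n = Set.range V := by
    ext v
    constructor
    · rintro ⟨i, hi⟩
      exact ⟨i, (funext fun j => (hi j).symm : V i = v)⟩
    · rintro ⟨i, rfl⟩
      exact ⟨i, fun j => rfl⟩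
  have hchoice : ∀ c : Fin (n+1), ∃ i : ℕ, (Phi α n i).card = (c : ℕ) :=
    fun c => exists_card_eq hirr n (Nat.lt_succ_iff.mp c.isLt)
  choose I hI using hchoice
  have hVeq : ∀ i i', V i = V i' ↔ Phi α n i = Phi α n i' := by
    intro i i'
    rw [← factor_eq_iff h0 h1 n i i']
    exact ⟨fun h j => congrFun h j, fun h => funext fun j => h j⟩
  have hr : Set.range V = Set.range (fun c : Fin (n+1) => V (I c)) := by
    ext v
    constructor
    · rintro ⟨i, rfl⟩
      refine ⟨⟨(Phi α n i).card, Nat.lt_succ_iff.mpr (Phi_card_le n i)⟩, ?_⟩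
      exact (hVeq _ _).mpr (Phi_eq_of_card_eq (by rw [hI]))
    · rintro ⟨c, rfl⟩
      exact ⟨I c, rfl⟩
  have hinj : Function.Injective (fun c : Fin (n+1) => V (I c)) := by
    intro c c' h
    have h2 := (hVeq _ _).mp h
    exact Fin.ext (by rw [← hI c, ← hI c', h2])
  rw [Comp, hVfac, hr, ← Set.image_univ, Set.ncard_image_of_injective _ hinj, Set.ncard_univ]
  simp

lemma fin2_val : ∀ v : Fin 2, (if v = 1 then (1:ℕ) else 0) = (v:ℕ) := by decide

lemma pcount_eq (h0 : 0 < α) (h1 : α < 1) (n : ℕ) :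
    ((pcount (W α) n : ℕ) : ℤ) = ⌊(n:ℝ)*α⌋ := by
  have hsum := sum_W h0 h1 0 n
  simp only [zero_add, Nat.cast_zero, zero_mul, Int.floor_zero, sub_zero] at hsum
  have hnat : pcount (W α) n = ∑ j ∈ Finset.range n, ((W α j : ℕ)) := by
    rw [pcount, Finset.card_filter]
    exact Finset.sum_congr rfl fun i _ => fin2_val _
  rw [hnat, ← hsum]
  push_cast
  rfl

lemma slope (h0 : 0 < α) (h1 : α < 1) :
    Filter.Tendsto (fun n : ℕ => (pcount (W α) n : ℝ) / n) Filter.atTop (nhds α) := by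
  have hlow : Filter.Tendsto (fun n : ℕ => α - 1/(n:ℝ)) Filter.atTop (nhds α) := by
    have h2 := (tendsto_const_nhds (x := α) (f := Filter.atTop (α := ℕ))).sub
      tendsto_one_div_atTop_nhds_zero_nat
    simpa using h2
  refine tendsto_of_tendsto_of_tendsto_of_le_of_le' hlow tendsto_const_nhds ?_ ?_
  · filter_upwards [Filter.eventually_ge_atTop 1] with n hn
    have hn0 : (0:ℝ) < n := by exact_mod_cast hn
    have hp : ((pcount (W α) n : ℕ) : ℝ) = ((⌊(n:ℝ)*α⌋ : ℤ) : ℝ) := by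
      exact_mod_cast pcount_eq h0 h1 n
    have hfl := Int.lt_floor_add_one ((n:ℝ)*α)
    rw [hp, le_div_iff₀ hn0]
    have h3 : (1/(n:ℝ)) * n = 1 := by field_simp
    nlinarith
  · filter_upwards [Filter.eventually_ge_atTop 1] with n hn
    have hn0 : (0:ℝ) < n := by exact_mod_cast hn
    have hp : ((pcount (W α) n : ℕ) : ℝ) = ((⌊(n:ℝ)*α⌋ : ℤ) : ℝ) := by
      exact_mod_cast pcount_eq h0 h1 n
    have hfl := Int.floor_le ((n:ℝ)*α)
    rw [hp, div_le_iff₀ hn0]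
    nlinarith

end Sturmian

/-- for irrational `α ∈ (0,1)`, the word `w n = ⌊(n+1)α⌋ − ⌊nα⌋`
is Sturmian with slope `α`. -/
theorem sturmian_word_of_irrational (α : ℝ) (hirr : Irrational α)
    (h0 : 0 < α) (h1 : α < 1) :
    ∀ w : ℕ → Fin 2,
      (w = fun n : ℕ => if ⌊((n : ℝ) + 1) * α⌋ - ⌊(n : ℝ) * α⌋ = 1 then (1 : Fin 2) else 0) →
      (∀ n : ℕ, 1 ≤ n → Comp w n = n + 1) ∧
      Filter.Tendsto (fun n : ℕ => (pcount w n : ℝ) / n) Filter.atTop (nhds α) := by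
  intro w hw
  have hwW : w = Sturmian.W α := hw
  subst hwW
  exact ⟨fun n _ => Sturmian.comp_eq hirr h0 h1 n, Sturmian.slope h0 h1⟩
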